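/- Let γ > 0 and b > 0 satisfy 1 − ρ(γ)·b > 0, and let T be the EAR recursion map built from γ and b. Then the limit as x tends to γ (with x ≠ γ, x > 0) of (T(x) − γ)/(x − γ)² equals (2γ² + 4γ + 1)·b / (2·(1+γ)²·(γ²+2γ)·√(γ²+2γ)·(1 − b/((1+γ)·√(γ²+2γ)))); that is, the EAR recursion has quadratic convergence rate at its fixed point γ with quadratic convergence factor g1(γ,b). -/

import Mathlib

open Filter Topology

/-- ρ(γ) = 1/((1+γ)·√(γ²+2γ)) -/
noncomputable def rho (γ : ℝ) : ℝ := 1 / ((1 + γ) * Real.sqrt (γ ^ 2 + 2 * γ))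

/-- μ(γ) = √(γ²+2γ)/(1+γ) − ln(1+γ)/((1+γ)·√(γ²+2γ)) -/
noncomputable def mu (γ : ℝ) : ℝ :=
  Real.sqrt (γ ^ 2 + 2 * γ) / (1 + γ) -
    Real.log (1 + γ) / ((1 + γ) * Real.sqrt (γ ^ 2 + 2 * γ))

/-- The EAR recursion map built from γ and b, where
c = ln(1+γ) − b·√(γ²+2γ)/(1+γ). -/
noncomputable def EAR (γ b x : ℝ) : ℝ :=
  Real.exp (((Real.log (1 + γ) - b * Real.sqrt (γ ^ 2 + 2 * γ) / (1 + γ)) + mu x * b) /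
    (1 - rho x * b)) - 1

/-- The quadratic convergence factor g₁(γ,b). -/
noncomputable def g1 (γ b : ℝ) : ℝ :=
  (2 * γ ^ 2 + 4 * γ + 1) * b /
    (2 * (1 + γ) ^ 2 * (γ ^ 2 + 2 * γ) * Real.sqrt (γ ^ 2 + 2 * γ) *
      (1 - b / ((1 + γ) * Real.sqrt (γ ^ 2 + 2 * γ))))

noncomputable def Gfun (γ x : ℝ) : ℝ :=
  x ^ 2 + 2 * x - Real.sqrt (γ ^ 2 + 2 * γ) / (1 + γ) * ((1 + x) * Real.sqrt (x ^ 2 + 2 * x))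
    - (Real.log (1 + x) - Real.log (1 + γ))

noncomputable def G1fun (γ x : ℝ) : ℝ :=
  2 * x + 2 - Real.sqrt (γ ^ 2 + 2 * γ) / (1 + γ) *
    ((x ^ 2 + 2 * x + (1 + x) ^ 2) / Real.sqrt (x ^ 2 + 2 * x)) - 1 / (1 + x)

noncomputable def Dfun (b x : ℝ) : ℝ := (1 + x) * Real.sqrt (x ^ 2 + 2 * x) - b

noncomputable def qfun (t : ℝ) : ℝ := if t = 0 then 1 else (Real.exp t - 1) / t

lemma quad_pos {x : ℝ} (hx : 0 < x) : 0 < x ^ 2 + 2 * x := by nlinarith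

lemma hasDerivAt_quad (x : ℝ) : HasDerivAt (fun y : ℝ => y ^ 2 + 2 * y) (2 * x + 2) x := by
  exact ((hasDerivAt_pow 2 x).add ((hasDerivAt_id x).const_mul 2)).congr_deriv (by norm_num)

lemma hasDerivAt_s {x : ℝ} (hx : 0 < x) :
    HasDerivAt (fun y : ℝ => Real.sqrt (y ^ 2 + 2 * y))
      ((x + 1) / Real.sqrt (x ^ 2 + 2 * x)) x := by
  have hq := quad_pos hx
  have h2 := (hasDerivAt_quad x).sqrt hq.ne'
  convert h2 using 1
  have hs : Real.sqrt (x ^ 2 + 2 * x) ≠ 0 := (Real.sqrt_pos.2 hq).ne'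
  field_simp

lemma hasDerivAt_G {γ x : ℝ} (hx : 0 < x) :
    HasDerivAt (Gfun γ) (G1fun γ x) x := by
  have hq := quad_pos hx
  have hS : (0:ℝ) < Real.sqrt (x ^ 2 + 2 * x) := Real.sqrt_pos.2 hq
  have h1x : (0:ℝ) < 1 + x := by linarith
  have hplus : HasDerivAt (fun y : ℝ => 1 + y) 1 x := by
    simpa using (hasDerivAt_id x).const_add 1
  have hprod : HasDerivAt (fun y : ℝ => (1 + y) * Real.sqrt (y ^ 2 + 2 * y))
      (1 * Real.sqrt (x ^ 2 + 2 * x) + (1 + x) * ((x + 1) / Real.sqrt (x ^ 2 + 2 * x))) x :=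
    hplus.mul (hasDerivAt_s hx)
  have hlog : HasDerivAt (fun y : ℝ => Real.log (1 + y)) (1 / (1 + x)) x := by
    have := (Real.hasDerivAt_log h1x.ne').comp x hplus
    exact this.congr_deriv (by simp)
  have := ((hasDerivAt_quad x).sub
      ((hprod.const_mul (Real.sqrt (γ ^ 2 + 2 * γ) / (1 + γ))))).sub
    (hlog.sub_const (Real.log (1 + γ)))
  have hS2 : Real.sqrt (x ^ 2 + 2 * x) ^ 2 = x ^ 2 + 2 * x := Real.sq_sqrt hq.le
  have key : (x ^ 2 + 2 * x + (1 + x) ^ 2) / Real.sqrt (x ^ 2 + 2 * x)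
      = 1 * Real.sqrt (x ^ 2 + 2 * x) + (1 + x) * ((x + 1) / Real.sqrt (x ^ 2 + 2 * x)) := by
    field_simp; rw [show x * (x + 2) = x ^ 2 + 2 * x by ring, hS2]; ring
  unfold Gfun G1fun
  rw [key]
  exact this

lemma G1fun_self {γ : ℝ} (hγ : 0 < γ) : G1fun γ γ = 0 := by
  have hS : (0:ℝ) < Real.sqrt (γ ^ 2 + 2 * γ) := Real.sqrt_pos.2 (quad_pos hγ)
  have h1γ : (0:ℝ) < 1 + γ := by linarith
  unfold G1fun
  field_simp
  ring

lemma Gfun_self {γ : ℝ} (hγ : 0 < γ) : Gfun γ γ = 0 := by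
  have hS2 : Real.sqrt (γ ^ 2 + 2 * γ) ^ 2 = γ ^ 2 + 2 * γ := Real.sq_sqrt (quad_pos hγ).le
  have h1γ : (1:ℝ) + γ ≠ 0 := by positivity
  unfold Gfun
  field_simp
  rw [show γ * (γ + 2) = γ ^ 2 + 2 * γ by ring, hS2]; ring

lemma hasDerivAt_G1 {γ : ℝ} (hγ : 0 < γ) :
    HasDerivAt (G1fun γ)
      ((2 * γ ^ 2 + 4 * γ + 1) / ((1 + γ) ^ 2 * (γ ^ 2 + 2 * γ))) γ := by
  have hq := quad_pos hγ
  have hS : (0:ℝ) < Real.sqrt (γ ^ 2 + 2 * γ) := Real.sqrt_pos.2 hq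
  have hS2 : Real.sqrt (γ ^ 2 + 2 * γ) ^ 2 = γ ^ 2 + 2 * γ := Real.sq_sqrt hq.le
  have h1γ : (0:ℝ) < 1 + γ := by linarith
  have hlin : HasDerivAt (fun y : ℝ => 2 * y + 2) 2 γ := by
    simpa using ((hasDerivAt_id γ).const_mul 2).add_const 2
  have hnum : HasDerivAt (fun y : ℝ => y ^ 2 + 2 * y + (1 + y) ^ 2)
      (2 * γ + 2 + 2 * (1 + γ)) γ := by
    have h2 : HasDerivAt (fun y : ℝ => (1 + y) ^ 2) (2 * (1 + γ)) γ := by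
      have := (((hasDerivAt_id γ).const_add 1).pow 2)
      exact this.congr_deriv (by simp)
    exact (hasDerivAt_quad γ).add h2
  have hdivq : HasDerivAt (fun y : ℝ => (y ^ 2 + 2 * y + (1 + y) ^ 2) / Real.sqrt (y ^ 2 + 2 * y))
      (((2 * γ + 2 + 2 * (1 + γ)) * Real.sqrt (γ ^ 2 + 2 * γ) -
        (γ ^ 2 + 2 * γ + (1 + γ) ^ 2) * ((γ + 1) / Real.sqrt (γ ^ 2 + 2 * γ))) /
        Real.sqrt (γ ^ 2 + 2 * γ) ^ 2) γ :=
    hnum.div (hasDerivAt_s hγ) hS.ne'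
  have hinv : HasDerivAt (fun y : ℝ => 1 / (1 + y)) (-1 / (1 + γ) ^ 2) γ := by
    have h2 : HasDerivAt (fun y : ℝ => 1 + y) 1 γ := by
      simpa using (hasDerivAt_id γ).const_add 1
    have := h2.inv h1γ.ne'
    simp only [one_div]
    exact this
  have := (hlin.sub (hdivq.const_mul (Real.sqrt (γ ^ 2 + 2 * γ) / (1 + γ)))).sub hinv
  refine this.congr_deriv ?_
  rw [hS2]
  field_simp
  rw [show γ * (γ + 2) = γ ^ 2 + 2 * γ by ring, hS2]; ring

lemma qfun_spec (t : ℝ) : Real.exp t - 1 = qfun t * t := by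
  unfold qfun
  by_cases h : t = 0
  · simp [h]
  · rw [if_neg h]; field_simp

lemma qfun_tendsto : Tendsto qfun (𝓝 0) (𝓝 1) := by
  rw [← nhdsNE_sup_pure (0:ℝ)]
  refine Tendsto.sup ?_ ?_
  · have h := hasDerivAt_iff_tendsto_slope.1 (Real.hasDerivAt_exp 0)
    rw [Real.exp_zero] at h
    refine h.congr' ?_
    filter_upwards [self_mem_nhdsWithin] with t ht
    simp only [Set.mem_compl_iff, Set.mem_singleton_iff] at ht
    rw [slope_def_field, qfun, if_neg ht]
    simp [div_eq_div_iff]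
  · have : qfun 0 = 1 := by simp [qfun]
    rw [← this]
    exact tendsto_pure_nhds qfun 0

lemma G_lim {γ : ℝ} (hγ : 0 < γ) :
    Tendsto (fun x => Gfun γ x / (x - γ) ^ 2) (𝓝[≠] γ)
      (𝓝 ((2 * γ ^ 2 + 4 * γ + 1) / ((1 + γ) ^ 2 * (γ ^ 2 + 2 * γ)) / 2)) := by
  have hev : ∀ᶠ x in 𝓝[≠] γ, 0 < x :=
    (eventually_gt_nhds hγ).filter_mono nhdsWithin_le_nhds
  apply HasDerivAt.lhopital_zero_nhdsNE
    (f' := G1fun γ) (g' := fun x => 2 * (x - γ))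
  · filter_upwards [hev] with x hx; exact hasDerivAt_G hx
  · filter_upwards with x
    have : HasDerivAt (fun y : ℝ => (y - γ) ^ 2) (2 * (x - γ) ^ 1 * 1) x :=
      ((hasDerivAt_id x).sub_const γ).pow 2
    simpa using this
  · filter_upwards [self_mem_nhdsWithin] with x hx
    have hxe : x ≠ γ := hx
    intro h
    apply hxe
    rcases mul_eq_zero.1 h with h|h
    · norm_num at h
    · linarith [sub_eq_zero.1 h]
  · have hc : ContinuousAt (Gfun γ) γ := (hasDerivAt_G hγ).continuousAt
    have h2 : Tendsto (Gfun γ) (𝓝[≠] γ) (𝓝 (Gfun γ γ)) :=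
      hc.tendsto.mono_left nhdsWithin_le_nhds
    rwa [Gfun_self hγ] at h2
  · have : Tendsto (fun x : ℝ => (x - γ) ^ 2) (𝓝 γ) (𝓝 ((γ - γ) ^ 2)) :=
      ((continuous_id.sub continuous_const).pow 2).continuousAt
    simp only [sub_self, ne_eq, OfNat.ofNat_ne_zero, not_false_eq_true, zero_pow] at this
    exact this.mono_left nhdsWithin_le_nhds
  · have hslope := hasDerivAt_iff_tendsto_slope.1 (hasDerivAt_G1 hγ)
    have heq : ∀ᶠ x in 𝓝[≠] γ, slope (G1fun γ) γ x / 2 = G1fun γ x / (2 * (x - γ)) := by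
      filter_upwards [self_mem_nhdsWithin] with x hx
      rw [slope_def_field, G1fun_self hγ, div_div]
      ring_nf
    exact (hslope.div_const 2).congr' heq

set_option maxHeartbeats 2000000 in
lemma key_id {γ b x : ℝ} (hγ : 0 < γ) (hx : 0 < x) (hD : Dfun b x ≠ 0) :
    EAR γ b x - γ = (1 + γ) * qfun (b * Gfun γ x / Dfun b x) * (b * Gfun γ x / Dfun b x) := by
  have hq := quad_pos hx
  have hS : (0:ℝ) < Real.sqrt (x ^ 2 + 2 * x) := Real.sqrt_pos.2 hq
  have h1x : (0:ℝ) < 1 + x := by linarith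
  have h1γ : (0:ℝ) < 1 + γ := by linarith
  have hP : (1 + x) * Real.sqrt (x ^ 2 + 2 * x) ≠ 0 := by positivity
  rw [Dfun] at hD ⊢
  have hrho : 1 - rho x * b =
      ((1 + x) * Real.sqrt (x ^ 2 + 2 * x) - b) / ((1 + x) * Real.sqrt (x ^ 2 + 2 * x)) := by
    unfold rho; field_simp
  have hne : 1 - rho x * b ≠ 0 := by
    rw [hrho]; exact div_ne_zero hD hP
  have hF : ((Real.log (1 + γ) - b * Real.sqrt (γ ^ 2 + 2 * γ) / (1 + γ)) + mu x * b) /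
      (1 - rho x * b) = Real.log (1 + γ) +
        b * Gfun γ x / ((1 + x) * Real.sqrt (x ^ 2 + 2 * x) - b) := by
    rw [div_eq_iff hne, hrho, ← mul_div_assoc, eq_div_iff hP]
    unfold mu Gfun
    set S := Real.sqrt (x ^ 2 + 2 * x) with hSdef
    have hS2 : S ^ 2 = x ^ 2 + 2 * x := Real.sq_sqrt hq.le
    have hSne : S ≠ 0 := hS.ne'
    have h1xne : (1:ℝ) + x ≠ 0 := h1x.ne'
    have h1γne : (1:ℝ) + γ ≠ 0 := h1γ.ne'
    rw [← hS2]
    have hD2 : S * (1 + x) - b ≠ 0 := by rw [mul_comm]; exact hD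
    field_simp
    ring
  rw [EAR, hF, Real.exp_add, Real.exp_log h1γ]
  set t := b * Gfun γ x / ((1 + x) * Real.sqrt (x ^ 2 + 2 * x) - b) with htdef
  rw [show (1 + γ) * Real.exp t - 1 - γ = (1 + γ) * (Real.exp t - 1) by ring, qfun_spec]
  ring

/-- Quadratic convergence of the EAR recursion at its fixed point γ:
(T(x) − γ)/(x − γ)² → g₁(γ,b) as x → γ with x ≠ γ, x > 0. -/
theorem stmt_2 (γ b : ℝ) (hγ : 0 < γ) (hb : 0 < b) (hpos : 0 < 1 - rho γ * b) :
    Tendsto (fun x => (EAR γ b x - γ) / (x - γ) ^ 2)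
      (𝓝[{x : ℝ | x ≠ γ ∧ 0 < x}] γ) (𝓝 (g1 γ b)) := by
  have hq := quad_pos hγ
  have hSγ : (0:ℝ) < Real.sqrt (γ ^ 2 + 2 * γ) := Real.sqrt_pos.2 hq
  have hS2γ : Real.sqrt (γ ^ 2 + 2 * γ) ^ 2 = γ ^ 2 + 2 * γ := Real.sq_sqrt hq.le
  have h1γ : (0:ℝ) < 1 + γ := by linarith
  have hPpos : (0:ℝ) < (1 + γ) * Real.sqrt (γ ^ 2 + 2 * γ) := by positivity
  have hDγ : 0 < Dfun b γ := by
    rw [Dfun]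
    rw [rho] at hpos
    have h2 : (1 / ((1 + γ) * Real.sqrt (γ ^ 2 + 2 * γ))) * b < 1 := by linarith
    rw [div_mul_eq_mul_div, one_mul, div_lt_one hPpos] at h2
    linarith
  have hDc : ContinuousAt (Dfun b) γ := by
    apply ContinuousAt.sub _ continuousAt_const
    exact ((continuous_const.add continuous_id).mul
      (Real.continuous_sqrt.comp ((continuous_pow 2).add
        (continuous_const.mul continuous_id)))).continuousAt
  have hevD : ∀ᶠ x in 𝓝 γ, 0 < Dfun b x := hDc.tendsto.eventually (eventually_gt_nhds hDγ)
  have hevx : ∀ᶠ x in 𝓝 γ, 0 < x := eventually_gt_nhds hγ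
  have hGc : ContinuousAt (Gfun γ) γ := (hasDerivAt_G hγ).continuousAt
  have htf0 : Tendsto (fun x => b * Gfun γ x / Dfun b x) (𝓝[≠] γ) (𝓝 0) := by
    have h1 : ContinuousAt (fun x => b * Gfun γ x / Dfun b x) γ :=
      (continuousAt_const.mul hGc).div hDc hDγ.ne'
    have h2 : Tendsto (fun x => b * Gfun γ x / Dfun b x) (𝓝[≠] γ)
        (𝓝 (b * Gfun γ γ / Dfun b γ)) := h1.tendsto.mono_left nhdsWithin_le_nhds
    rw [Gfun_self hγ] at h2
    simpa using h2
  have hqt : Tendsto (fun x => qfun (b * Gfun γ x / Dfun b x)) (𝓝[≠] γ) (𝓝 1) :=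
    qfun_tendsto.comp htf0
  have hbD : Tendsto (fun x => b / Dfun b x) (𝓝[≠] γ) (𝓝 (b / Dfun b γ)) :=
    ((continuousAt_const.div hDc hDγ.ne').tendsto).mono_left nhdsWithin_le_nhds
  have hmain : Tendsto (fun x => (1 + γ) * qfun (b * Gfun γ x / Dfun b x) * (b / Dfun b x) *
      (Gfun γ x / (x - γ) ^ 2)) (𝓝[≠] γ)
      (𝓝 ((1 + γ) * 1 * (b / Dfun b γ) *
        ((2 * γ ^ 2 + 4 * γ + 1) / ((1 + γ) ^ 2 * (γ ^ 2 + 2 * γ)) / 2))) :=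
    ((tendsto_const_nhds.mul hqt).mul hbD).mul (G_lim hγ)
  have hval : g1 γ b = (1 + γ) * 1 * (b / Dfun b γ) *
      ((2 * γ ^ 2 + 4 * γ + 1) / ((1 + γ) ^ 2 * (γ ^ 2 + 2 * γ)) / 2) := by
    have hone : 1 - b / ((1 + γ) * Real.sqrt (γ ^ 2 + 2 * γ)) ≠ 0 := by
      have he : 1 - b / ((1 + γ) * Real.sqrt (γ ^ 2 + 2 * γ)) =
          Dfun b γ / ((1 + γ) * Real.sqrt (γ ^ 2 + 2 * γ)) := by
        rw [Dfun]; field_simp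
      rw [he]
      exact div_ne_zero hDγ.ne' hPpos.ne'
    have hD' : (1 + γ) * Real.sqrt (γ ^ 2 + 2 * γ) - b ≠ 0 := by
      rw [Dfun] at hDγ; exact hDγ.ne'
    rw [g1, Dfun]
    field_simp
  rw [hval]
  have heq : ∀ᶠ x in 𝓝[≠] γ, (1 + γ) * qfun (b * Gfun γ x / Dfun b x) * (b / Dfun b x) *
      (Gfun γ x / (x - γ) ^ 2) = (EAR γ b x - γ) / (x - γ) ^ 2 := by
    filter_upwards [hevx.filter_mono nhdsWithin_le_nhds,
      hevD.filter_mono nhdsWithin_le_nhds, self_mem_nhdsWithin] with x hx hDx hne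
    have hxe : x ≠ γ := hne
    rw [key_id hγ hx hDx.ne']
    have hsub : x - γ ≠ 0 := sub_ne_zero.2 hxe
    field_simp
  have final := hmain.congr' heq
  exact final.mono_left (nhdsWithin_mono γ (fun x hx => hx.1))
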